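/- Update invariance of decryption up to error: with ct_e = (C_{e,1}, C_{e,2}) and the updated ciphertext ct_{e+1} = (C₁^{(1)}+C₁^{(2)}, C_{e,2}+C₂^{(1)}+C₂^{(2)}) defined by C₁^{(1)} = Ord(C_{e,1})·(S'_{(1)}·A + E'_{(1)}), C₂^{(1)} = Ord(C_{e,1})·(S'_{(1)}·B_{e+1} + E''_{(1)} − ⊗_D(S_e)), C₁^{(2)} = R·(S'_{(2)}·A + E'_{(2)}), C₂^{(2)} = R·(S'_{(2)}·B_{e+1} + E''_{(2)}), and B_{e+1} = A·S_{e+1} + E, the following identity holds over Z_q: C_{e+1,2} − C_{e+1,1}·S_{e+1} = C_{e,2} − C_{e,1}·S_e + Error, where Error = (Ord(C_{e,1})·S'_{(1)} + R·S'_{(2)})·E − (Ord(C_{e,1})·E'_{(1)} + R·E'_{(2)})·S_{e+1} + Ord(C_{e,1})·E''_{(1)} + R·E''_{(2)}. -/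

import Mathlib

lemma nat_bits_sum : ∀ (D x : ℕ), x < 2 ^ D →
    (∑ b ∈ Finset.range D, (if Nat.testBit x b then 1 else 0) * 2 ^ b) = x := by
  intro D
  induction D with
  | zero => intro x hx; interval_cases x; simp
  | succ D ih =>
    intro x hx
    rw [Finset.sum_range_succ']
    have h2 : x / 2 < 2 ^ D := by omega
    have := ih (x / 2) h2
    simp only [Nat.testBit_succ] at *
    have hx0 : (if x.testBit 0 then 1 else 0) = x % 2 := by
      rcases Nat.even_or_odd x with h | h
      · simp [Nat.testBit_zero, Nat.even_iff.mp h, h, Nat.not_odd_iff_even.mpr h]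
      · simp [Nat.testBit_zero, h, Nat.odd_iff.mp h]
    calc (∑ b ∈ Finset.range D, (if (x/2).testBit b then 1 else 0) * 2 ^ (b+1))
          + (if x.testBit 0 then 1 else 0) * 2 ^ 0
        = 2 * (∑ b ∈ Finset.range D, (if (x/2).testBit b then 1 else 0) * 2 ^ b) + x % 2 := by
          rw [Finset.mul_sum, hx0]; ring_nf
      _ = x := by rw [this]; omega

lemma ord_mul_gadget (D n nb mb : ℕ)
    (Se : Matrix (Fin n) (Fin nb) (ZMod (2 ^ D)))
    (C1 : Matrix (Fin mb) (Fin n) (ZMod (2 ^ D))) :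
    (Matrix.of fun i (p : Fin n × Fin D) =>
      if Nat.testBit (C1 i p.1).val (p.2 : ℕ) then (1 : ZMod (2 ^ D)) else 0) *
    (Matrix.of fun (p : Fin n × Fin D) j => (2 : ZMod (2 ^ D)) ^ (p.2 : ℕ) * Se p.1 j)
      = C1 * Se := by
  ext i j
  simp only [Matrix.mul_apply, Matrix.of_apply]
  rw [Fintype.sum_prod_type]
  refine Finset.sum_congr rfl fun k _ => ?_
  have hlt : (C1 i k).val < 2 ^ D := ZMod.val_lt _
  have := nat_bits_sum D (C1 i k).val hlt
  calc (∑ b : Fin D, (if Nat.testBit (C1 i k).val (b : ℕ) then (1 : ZMod (2^D)) else 0)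
          * ((2 : ZMod (2^D)) ^ (b : ℕ) * Se k j))
      = (∑ b : Fin D, (if Nat.testBit (C1 i k).val (b:ℕ) then (1 : ZMod (2^D)) else 0) * 2 ^ (b:ℕ)) * Se k j := by
        rw [Finset.sum_mul]; exact Finset.sum_congr rfl fun b _ => by ring
    _ = C1 i k * Se k j := by
        congr 1
        have : ((∑ b ∈ Finset.range D, (if Nat.testBit (C1 i k).val b then 1 else 0) * 2 ^ b : ℕ) : ZMod (2^D)) = (((C1 i k).val : ℕ) : ZMod (2^D)) := by rw [this]
        rw [ZMod.natCast_val, ZMod.cast_id] at this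
        conv_rhs => rw [← this]
        rw [Nat.cast_sum, Fin.sum_univ_eq_sum_range
          (fun b => (if Nat.testBit (C1 i k).val b then (1:ZMod (2^D)) else 0) * 2 ^ b)]
        exact Finset.sum_congr rfl fun b _ => by split <;> simp

/-- Update invariance of decryption up to error: with `B_{e+1} = A·S_{e+1} + E`
and the updated ciphertext built from the key-switching token, one has
`C_{e+1,2} − C_{e+1,1}·S_{e+1} = C_{e,2} − C_{e,1}·S_e + Error` over
`ℤ_q`, `q = 2^D`. -/
theorem ue_update_invariance (D n nb mb : ℕ)
    (A : Matrix (Fin n) (Fin n) (ZMod (2 ^ D)))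
    (Se Se1 E : Matrix (Fin n) (Fin nb) (ZMod (2 ^ D)))
    (C1 : Matrix (Fin mb) (Fin n) (ZMod (2 ^ D)))
    (C2 : Matrix (Fin mb) (Fin nb) (ZMod (2 ^ D)))
    (S1 E1 : Matrix (Fin n × Fin D) (Fin n) (ZMod (2 ^ D)))
    (E1'' : Matrix (Fin n × Fin D) (Fin nb) (ZMod (2 ^ D)))
    (S2 E2 : Matrix (Fin n) (Fin n) (ZMod (2 ^ D)))
    (E2'' : Matrix (Fin n) (Fin nb) (ZMod (2 ^ D)))
    (R : Matrix (Fin mb) (Fin n) (ZMod (2 ^ D))) :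
    -- `O = Ord(C_{e,1})` is the bit-decomposition, `G = ⊗_D(S_e)` the gadget
    -- expansion, `Be1 = A·S_{e+1} + E` the next public key.
    let O : Matrix (Fin mb) (Fin n × Fin D) (ZMod (2 ^ D)) :=
      Matrix.of fun i p =>
        if Nat.testBit (C1 i p.1).val (p.2 : ℕ) then 1 else 0
    let G : Matrix (Fin n × Fin D) (Fin nb) (ZMod (2 ^ D)) :=
      Matrix.of fun p j => (2 : ZMod (2 ^ D)) ^ (p.2 : ℕ) * Se p.1 j
    let Be1 := A * Se1 + E
    (C2 + (O * (S1 * Be1 + E1'' - G)) + (R * (S2 * Be1 + E2'')))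
        - ((O * (S1 * A + E1)) + (R * (S2 * A + E2))) * Se1
      = C2 - C1 * Se +
        ((O * S1 + R * S2) * E - (O * E1 + R * E2) * Se1
          + O * E1'' + R * E2'') := by
  intro O G Be1
  have hOG : O * G = C1 * Se := ord_mul_gadget D n nb mb Se C1
  simp only [Be1, Matrix.mul_add, Matrix.add_mul, Matrix.mul_sub, Matrix.sub_mul,
    hOG, ← Matrix.mul_assoc]
  abel
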